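/- If T : V → V is a linear isomorphism of a finite-dimensional real vector space and v is a recurrent point of T with T_H v = λv for some λ > 0, then λ = 1; in particular every recurrent point of T lies in the eigenspace of T_H with eigenvalue 1. -/

import Mathlib

open Set Filter Topology

/-- The recurrent set of `T`: points in their own ω-limit set. -/
def recurrentSet {X : Type*} [TopologicalSpace X] (T : X → X) : Set X :=
  {x | MapClusterPt x Filter.atTop fun n => T^[n] x}

/-- `T = T_H T_E T_U` is a multiplicative Jordan decomposition: the factors commute,
`T_H` is diagonalizable with positive eigenvalues, `T_E` is an isometry for some norm,
and `T_U` is unipotent. -/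
structure IsMulJordanDecomp {V : Type*} [AddCommGroup V] [Module ℝ V]
    (T TH TE TU : V →ₗ[ℝ] V) : Prop where
  eq : T = TH ∘ₗ TE ∘ₗ TU
  commHE : Commute TH TE
  commHU : Commute TH TU
  commEU : Commute TE TU
  hyperbolic : ∃ (n : ℕ) (b : Module.Basis (Fin n) ℝ V) (c : Fin n → ℝ),
    (∀ i, 0 < c i) ∧ ∀ i, TH (b i) = c i • b i
  elliptic : ∃ N : V → ℝ, (∀ v, 0 ≤ N v) ∧ (∀ v, N v = 0 ↔ v = 0) ∧
    (∀ v w, N (v + w) ≤ N v + N w) ∧ (∀ (r : ℝ) (v), N (r • v) = |r| * N v) ∧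
    ∀ v, N (TE v) = N v
  unipotent : IsNilpotent (TU - LinearMap.id)

set_option linter.unusedSectionVars false
set_option maxHeartbeats 1000000


section Helpers

variable {V : Type*} [NormedAddCommGroup V] [NormedSpace ℝ V] [FiniteDimensional ℝ V]

lemma jordan_N_zero {N : V → ℝ} (hsmul : ∀ (r : ℝ) (v), N (r • v) = |r| * N v) :
    N 0 = 0 := by
  have := hsmul 0 0
  simpa using this

lemma jordan_N_sum_le {N : V → ℝ} (htri : ∀ v w, N (v + w) ≤ N v + N w)
    (hsmul : ∀ (r : ℝ) (v), N (r • v) = |r| * N v)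
    {ι : Type*} (s : Finset ι) (f : ι → V) :
    N (∑ i ∈ s, f i) ≤ ∑ i ∈ s, N (f i) := by
  induction s using Finset.cons_induction with
  | empty => simp [jordan_N_zero hsmul]
  | cons a s ha ih =>
    rw [Finset.sum_cons, Finset.sum_cons]
    exact (htri _ _).trans (by linarith)

/-- Equivalence of the norm `N` with the ambient norm, plus continuity. -/
lemma jordan_N_equiv {N : V → ℝ} (h0 : ∀ v, 0 ≤ N v)
    (hdef : ∀ v, N v = 0 ↔ v = 0)
    (htri : ∀ v w, N (v + w) ≤ N v + N w)
    (hsmul : ∀ (r : ℝ) (v), N (r • v) = |r| * N v) :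
    ∃ Cu Cl : ℝ, 0 < Cu ∧ 0 < Cl ∧ (∀ x, N x ≤ Cu * ‖x‖) ∧
      (∀ x, Cl * ‖x‖ ≤ N x) ∧ Continuous N := by
  classical
  -- upper bound via a basis
  set b := Module.finBasis ℝ V with hbdef
  set Cu : ℝ := 1 + ∑ i, ‖LinearMap.toContinuousLinearMap (b.coord i)‖ * N (b i) with hCu
  have hCupos : 0 < Cu := by
    have : (0:ℝ) ≤ ∑ i, ‖LinearMap.toContinuousLinearMap (b.coord i)‖ * N (b i) :=
      Finset.sum_nonneg fun i _ => mul_nonneg (norm_nonneg _) (h0 _)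
    linarith
  have hub : ∀ x, N x ≤ Cu * ‖x‖ := by
    intro x
    have hx : x = ∑ i, b.repr x i • b i := (b.sum_repr x).symm
    calc N x = N (∑ i, b.repr x i • b i) := by rw [← hx]
      _ ≤ ∑ i, N (b.repr x i • b i) := jordan_N_sum_le htri hsmul _ _
      _ = ∑ i, |b.repr x i| * N (b i) := by simp [hsmul]
      _ ≤ ∑ i, (‖LinearMap.toContinuousLinearMap (b.coord i)‖ * ‖x‖) * N (b i) := by
          apply Finset.sum_le_sum
          intro i _
          apply mul_le_mul_of_nonneg_right _ (h0 _)
          have := (LinearMap.toContinuousLinearMap (b.coord i)).le_opNorm x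
          simpa [Real.norm_eq_abs] using this
      _ = (∑ i, ‖LinearMap.toContinuousLinearMap (b.coord i)‖ * N (b i)) * ‖x‖ := by
          rw [Finset.sum_mul]; congr 1; ext i; ring
      _ ≤ Cu * ‖x‖ := by
          apply mul_le_mul_of_nonneg_right _ (norm_nonneg _)
          rw [hCu]; linarith
  -- Lipschitz, hence continuous
  have hlip : ∀ x y, |N x - N y| ≤ Cu * ‖x - y‖ := by
    intro x y
    have h1 : N x ≤ N (x - y) + N y := by
      have := htri (x - y) y; simpa using this
    have h2 : N y ≤ N (x - y) + N x := by
      have h3 : N (y - x) = N (x - y) := by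
        have := hsmul (-1) (x - y); simpa [neg_sub] using this
      have := htri (y - x) x; rw [h3] at this; simpa using this
    have h4 := hub (x - y)
    rw [abs_sub_le_iff]; constructor <;> linarith
  have hNcont : Continuous N := by
    apply (LipschitzWith.of_dist_le_mul (K := Real.toNNReal Cu) (f := N) ?_).continuous
    intro x y
    rw [Real.dist_eq, dist_eq_norm, Real.coe_toNNReal _ hCupos.le]
    exact hlip x y
  -- lower bound
  rcases subsingleton_or_nontrivial V with hV | hV
  · refine ⟨Cu, 1, hCupos, one_pos, hub, ?_, hNcont⟩
    intro x
    have : x = 0 := Subsingleton.elim x 0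
    simp [this, jordan_N_zero hsmul]
  · obtain ⟨z0, hz0⟩ := exists_norm_eq V (zero_le_one)
    have hne : (Metric.sphere (0:V) 1).Nonempty := ⟨z0, by simp [hz0]⟩
    obtain ⟨z, hz, hzmin⟩ := (isCompact_sphere (0:V) 1).exists_isMinOn hne hNcont.continuousOn
    have hz1 : ‖z‖ = 1 := by simpa using hz
    have hzne : z ≠ 0 := by intro h; rw [h] at hz1; simp at hz1
    have hCl : 0 < N z := by
      rcases (h0 z).lt_or_eq with h | h
      · exact h
      · exact absurd ((hdef z).mp h.symm) hzne
    refine ⟨Cu, N z, hCupos, hCl, hub, ?_, hNcont⟩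
    intro x
    rcases eq_or_ne x 0 with rfl | hx
    · simp [jordan_N_zero hsmul]
    · have hxn : (0:ℝ) < ‖x‖ := norm_pos_iff.mpr hx
      set u := ‖x‖⁻¹ • x with hu
      have hun : ‖u‖ = 1 := by
        rw [hu, norm_smul, norm_inv, norm_norm, inv_mul_cancel₀ hxn.ne']
      have husph : u ∈ Metric.sphere (0:V) 1 := by simp [hun]
      have h1 : N z ≤ N u := hzmin husph
      have h2 : N x = ‖x‖ * N u := by
        have hxu : x = ‖x‖ • u := by rw [hu, smul_smul, mul_inv_cancel₀ hxn.ne', one_smul]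
        nth_rewrite 1 [hxu]
        rw [hsmul, abs_of_pos hxn]
      rw [h2, mul_comm (N z) ‖x‖]
      exact mul_le_mul_of_nonneg_left h1 hxn.le

end Helpers


section Helpers2

variable {V : Type*} [NormedAddCommGroup V] [NormedSpace ℝ V] [FiniteDimensional ℝ V]

lemma jordan_N_sum_le' {N : V → ℝ} (htri : ∀ v w, N (v + w) ≤ N v + N w)
    (hsmul : ∀ (r : ℝ) (v), N (r • v) = |r| * N v)
    {ι : Type*} (s : Finset ι) (f : ι → V) :
    N (∑ i ∈ s, f i) ≤ ∑ i ∈ s, N (f i) := by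
  induction s using Finset.cons_induction with
  | empty => simpa using le_of_eq (by simpa using hsmul 0 0)
  | cons a s ha ih =>
    rw [Finset.sum_cons, Finset.sum_cons]
    exact (htri _ _).trans (by linarith)

/-- Polynomial growth bound for powers of a unipotent endomorphism. -/
lemma unipotent_pow_bound {N : V → ℝ} (h0 : ∀ v, 0 ≤ N v)
    (htri : ∀ v w, N (v + w) ≤ N v + N w)
    (hsmul : ∀ (r : ℝ) (v), N (r • v) = |r| * N v)
    (S : V →ₗ[ℝ] V) {m : ℕ} (hS : S ^ m = 0) (x : V) (n : ℕ) :
    N ((((1 : V →ₗ[ℝ] V) + S) ^ n) x) ≤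
      ((n:ℝ) + 1) ^ m * ∑ j ∈ Finset.range m, N ((S ^ j) x) := by
  have hcomm : Commute S (1 : V →ₗ[ℝ] V) := Commute.one_right S
  have hpow : ((1 : V →ₗ[ℝ] V) + S) ^ n
      = ∑ k ∈ Finset.range (n + 1), S ^ k * (n.choose k : V →ₗ[ℝ] V) := by
    rw [add_comm, hcomm.add_pow]
    congr 1; ext k; rw [one_pow, mul_one]
  have happ : ((((1 : V →ₗ[ℝ] V) + S) ^ n)) x
      = ∑ k ∈ Finset.range (n + 1), (n.choose k : ℝ) • ((S ^ k) x) := by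
    rw [hpow, LinearMap.sum_apply]
    congr 1; ext k
    rw [Module.End.mul_apply]
    have : ((n.choose k : V →ₗ[ℝ] V)) x = (n.choose k : ℕ) • x := by
      simp [Module.End.natCast_apply]
    rw [this, ← Nat.cast_smul_eq_nsmul ℝ, map_smul]
  rw [happ]
  calc N (∑ k ∈ Finset.range (n + 1), (n.choose k : ℝ) • ((S ^ k) x))
      ≤ ∑ k ∈ Finset.range (n + 1), N ((n.choose k : ℝ) • ((S ^ k) x)) :=
        jordan_N_sum_le' htri hsmul _ _
    _ = ∑ k ∈ Finset.range (n + 1), (n.choose k : ℝ) * N ((S ^ k) x) := by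
        apply Finset.sum_congr rfl; intro k _
        rw [hsmul, abs_of_nonneg (by positivity)]
    _ ≤ ∑ k ∈ Finset.range (n + 1),
          (if k < m then ((n:ℝ) + 1) ^ m * N ((S ^ k) x) else 0) := by
        apply Finset.sum_le_sum; intro k _
        by_cases hk : k < m
        · simp only [hk, if_true]
          apply mul_le_mul_of_nonneg_right _ (h0 _)
          calc (n.choose k : ℝ) ≤ (n : ℝ) ^ k := by
                exact_mod_cast Nat.choose_le_pow n k
            _ ≤ ((n:ℝ) + 1) ^ k := by
                apply pow_le_pow_left₀ (by positivity) (by linarith)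
            _ ≤ ((n:ℝ) + 1) ^ m := by
                apply pow_le_pow_right₀ (by linarith) hk.le
        · simp only [hk, if_false]
          have : S ^ k = 0 := pow_eq_zero_of_le (Nat.le_of_not_lt hk) hS
          rw [this]
          simp only [LinearMap.zero_apply]
          rw [show N (0:V) = 0 by simpa using hsmul 0 0]
          simp
    _ = ∑ k ∈ (Finset.range (n + 1)).filter (· < m), ((n:ℝ) + 1) ^ m * N ((S ^ k) x) :=
        (Finset.sum_filter _ _).symm
    _ ≤ ∑ k ∈ Finset.range m, ((n:ℝ) + 1) ^ m * N ((S ^ k) x) := by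
        apply Finset.sum_le_sum_of_subset_of_nonneg
        · intro k hk
          simp only [Finset.mem_filter, Finset.mem_range] at hk ⊢
          exact hk.2
        · intro k _ _
          exact mul_nonneg (by positivity) (h0 _)
    _ = ((n:ℝ) + 1) ^ m * ∑ j ∈ Finset.range m, N ((S ^ j) x) := by
        rw [Finset.mul_sum]

end Helpers2


section Helpers3

variable {V : Type*} [NormedAddCommGroup V] [NormedSpace ℝ V] [FiniteDimensional ℝ V]
variable {d : ℕ} (b : Module.Basis (Fin d) ℝ V) (c : Fin d → ℝ) {TH : V →ₗ[ℝ] V}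

/-- Spectral projection onto the `μ`-eigenspace determined by the eigenbasis `b`. -/
noncomputable def eigProj (μ : ℝ) : V →ₗ[ℝ] V :=
  ∑ i ∈ Finset.univ.filter (fun i => c i = μ),
    (LinearMap.toSpanSingleton ℝ V (b i)) ∘ₗ (b.coord i)

lemma eigProj_apply (μ : ℝ) (x : V) :
    eigProj b c μ x = ∑ i ∈ Finset.univ.filter (fun i => c i = μ), b.repr x i • b i := by
  rw [eigProj, LinearMap.sum_apply]
  apply Finset.sum_congr rfl
  intro i _
  simp [LinearMap.toSpanSingleton_apply]

lemma coord_TH (hb : ∀ i, TH (b i) = c i • b i) (x : V) (i : Fin d) :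
    b.repr (TH x) i = c i * b.repr x i := by
  have hmap : (b.coord i) ∘ₗ TH = c i • b.coord i := by
    apply b.ext
    intro j
    rw [LinearMap.comp_apply, hb j]
    simp only [map_smul, LinearMap.smul_apply, Module.Basis.coord_apply, Module.Basis.repr_self,
      smul_eq_mul]
    by_cases h : j = i
    · subst h; simp
    · simp [h]
  have := LinearMap.congr_fun hmap x
  simpa [LinearMap.comp_apply, smul_eq_mul] using this

lemma repr_eq_zero_of_eigen (hb : ∀ i, TH (b i) = c i • b i) {μ : ℝ} {x : V}
    (hx : TH x = μ • x) {i : Fin d} (hi : c i ≠ μ) : b.repr x i = 0 := by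
  have h1 : b.repr (TH x) i = c i * b.repr x i := coord_TH b c hb x i
  have h2 : b.repr (TH x) i = μ * b.repr x i := by rw [hx]; simp
  have h3 : (c i - μ) * b.repr x i = 0 := by rw [sub_mul]; linarith
  rcases mul_eq_zero.mp h3 with h | h
  · exact absurd (by linarith : c i = μ) hi
  · exact h

lemma eigProj_eigen (hb : ∀ i, TH (b i) = c i • b i) (μ : ℝ) (x : V) :
    TH (eigProj b c μ x) = μ • eigProj b c μ x := by
  rw [eigProj_apply, map_sum, Finset.smul_sum]
  apply Finset.sum_congr rfl
  intro i hi
  have hci : c i = μ := (Finset.mem_filter.mp hi).2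
  rw [map_smul, hb i, hci, smul_comm]

lemma eigProj_eq_self (hb : ∀ i, TH (b i) = c i • b i) {μ : ℝ} {y : V}
    (hy : TH y = μ • y) : eigProj b c μ y = y := by
  rw [eigProj_apply]
  have hzero : ∀ i ∈ Finset.univ, i ∉ Finset.univ.filter (fun i => c i = μ) →
      b.repr y i • b i = 0 := by
    intro i _ hi
    have hci : c i ≠ μ := by
      simp only [Finset.mem_filter, Finset.mem_univ, true_and] at hi
      exact hi
    rw [repr_eq_zero_of_eigen b c hb hy hci, zero_smul]
  rw [Finset.sum_subset (Finset.filter_subset _ _) hzero, b.sum_repr]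

lemma eigProj_eq_zero (hb : ∀ i, TH (b i) = c i • b i) {μ μ' : ℝ} {y : V}
    (hy : TH y = μ' • y) (hne : μ ≠ μ') : eigProj b c μ y = 0 := by
  rw [eigProj_apply]
  apply Finset.sum_eq_zero
  intro i hi
  have hci : c i = μ := (Finset.mem_filter.mp hi).2
  have : c i ≠ μ' := by rw [hci]; exact hne
  rw [repr_eq_zero_of_eigen b c hb hy this, zero_smul]

lemma eigProj_comm (hb : ∀ i, TH (b i) = c i • b i) (μ : ℝ) (A : V →ₗ[ℝ] V)
    (hA : ∀ z, TH (A z) = A (TH z)) (x : V) :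
    eigProj b c μ (A x) = A (eigProj b c μ x) := by
  have : (eigProj b c μ) ∘ₗ A = A ∘ₗ (eigProj b c μ) := by
    apply b.ext
    intro j
    have hAb : TH (A (b j)) = c j • (A (b j)) := by
      rw [hA, hb j, map_smul]
    rw [LinearMap.comp_apply, LinearMap.comp_apply]
    by_cases hcj : c j = μ
    · rw [eigProj_eq_self b c hb (by rw [hAb, hcj]),
        eigProj_eq_self b c hb (by rw [hb j, hcj])]
    · rw [eigProj_eq_zero b c hb hAb (fun h => hcj h.symm),
        eigProj_eq_zero b c hb (hb j) (fun h => hcj h.symm), map_zero]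
  exact LinearMap.congr_fun this x

lemma eigProj_repr (μ : ℝ) (x : V) {i : Fin d} (hci : c i = μ) :
    b.repr (eigProj b c μ x) i = b.repr x i := by
  rw [eigProj_apply, map_sum, Finsupp.finset_sum_apply]
  rw [Finset.sum_eq_single_of_mem i (Finset.mem_filter.mpr ⟨Finset.mem_univ i, hci⟩)]
  · simp
  · intro j _ hj
    rw [map_smul, Module.Basis.repr_self, Finsupp.smul_apply, Finsupp.single_apply]
    simp [hj]

end Helpers3
lemma poly_geom_tendsto (m : ℕ) {r : ℝ} (h0 : 0 ≤ r) (h1 : r < 1) :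
    Filter.Tendsto (fun n : ℕ => ((n:ℝ) + 1) ^ m * r ^ n) atTop (𝓝 0) := by
  rcases eq_or_lt_of_le h0 with rfl | hr
  · apply Filter.Tendsto.congr' _ tendsto_const_nhds
    filter_upwards [eventually_ge_atTop 1] with n hn
    rw [zero_pow (by omega), mul_zero]
  · have h := tendsto_pow_const_mul_const_pow_of_lt_one m h0 h1
    have h2 := h.comp (tendsto_add_atTop_nat 1)
    have h3 := h2.const_mul r⁻¹
    rw [mul_zero] at h3
    apply h3.congr
    intro n
    simp only [Function.comp_apply]
    push_cast
    rw [pow_succ]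
    field_simp

section Key

variable {V : Type*} [NormedAddCommGroup V] [NormedSpace ℝ V] [FiniteDimensional ℝ V]

lemma jordan_key {T TH TE TU : V →ₗ[ℝ] V} (hJ : IsMulJordanDecomp T TH TE TU)
    {l : ℝ} (hl : 0 < l) (hlne : l ≠ 1) {x : V} (heig : TH x = l • x)
    (hrec : MapClusterPt x atTop fun n => T^[n] x) : x = 0 := by
  obtain ⟨N, h0, hdef, htri, hsmul, hiso⟩ := hJ.elliptic
  obtain ⟨Cu, Cl, hCu, hCl, hub, hlb, hNcont⟩ := jordan_N_equiv h0 hdef htri hsmul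
  obtain ⟨m₀, hm₀⟩ := hJ.unipotent
  set S : V →ₗ[ℝ] V := TU - 1 with hSdef
  set m : ℕ := m₀ + 1 with hmdef
  have hSm₀ : S ^ m₀ = 0 := by
    rw [hSdef, Module.End.one_eq_id]; exact hm₀
  have hS : S ^ m = 0 := by rw [hmdef, pow_succ, hSm₀, zero_mul]
  have hTU : TU = 1 + S := by rw [hSdef]; abel
  -- isometry iterates
  have hTEiter : ∀ (k : ℕ) (z : V), N ((TE ^ k) z) = N z := by
    intro k
    induction k with
    | zero => intro z; simp
    | succ k ih =>
      intro z
      rw [pow_succ, Module.End.mul_apply, ih, hiso]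
  -- eigen step
  have hstep : ∀ (A : V →ₗ[ℝ] V), Commute TH A → ∀ z, TH z = l • z →
      TH (A z) = l • A z := by
    intro A hA z hz
    have h1 : TH (A z) = A (TH z) := by
      have := LinearMap.congr_fun hA z
      simpa [Module.End.mul_apply] using this
    rw [h1, hz, map_smul]
  have hTHpow : ∀ (k : ℕ) (z : V), TH z = l • z → (TH ^ k) z = l ^ k • z := by
    intro k
    induction k with
    | zero => intro z _; simp
    | succ k ih =>
      intro z hz
      rw [pow_succ, Module.End.mul_apply, hz, map_smul, ih z hz, smul_smul, ← pow_succ']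
  -- formula for T^n on the eigenvector
  have hTn : ∀ n : ℕ, (T ^ n) x = (l ^ n) • ((TE ^ n) ((TU ^ n) x)) := by
    intro n
    have hTeq : T = TH * (TE * TU) := by rw [hJ.eq]; rfl
    have hpowT : T ^ n = TH ^ n * (TE ^ n * TU ^ n) := by
      rw [hTeq, (hJ.commHE.mul_right hJ.commHU).mul_pow, hJ.commEU.mul_pow]
    have hz : TH ((TE ^ n) ((TU ^ n) x)) = l • ((TE ^ n) ((TU ^ n) x)) :=
      hstep _ (hJ.commHE.pow_right n) _ (hstep _ (hJ.commHU.pow_right n) _ heig)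
    rw [hpowT, Module.End.mul_apply, Module.End.mul_apply]
    exact hTHpow n _ hz
  have hNTn : ∀ n : ℕ, N ((T ^ n) x) = l ^ n * N ((TU ^ n) x) := by
    intro n
    rw [hTn n, hsmul, abs_of_pos (pow_pos hl n), hTEiter]
  -- upper bound
  set K : ℝ := ∑ j ∈ Finset.range m, N ((S ^ j) x) with hKdef
  have hKnn : 0 ≤ K := Finset.sum_nonneg fun j _ => h0 _
  have hupper : ∀ n : ℕ, N ((T ^ n) x) ≤ (((n:ℝ) + 1) ^ m * l ^ n) * K := by
    intro n
    rw [hNTn n]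
    have h1 : N ((TU ^ n) x) ≤ ((n:ℝ) + 1) ^ m * K := by
      have := unipotent_pow_bound h0 htri hsmul S hS x n
      rw [← hTU] at this
      exact this
    calc l ^ n * N ((TU ^ n) x) ≤ l ^ n * (((n:ℝ) + 1) ^ m * K) :=
          mul_le_mul_of_nonneg_left h1 (pow_pos hl n).le
      _ = (((n:ℝ) + 1) ^ m * l ^ n) * K := by ring
  -- the inverse of TU
  set W : (V →ₗ[ℝ] V) := ∑ j ∈ Finset.range m, (-S) ^ j with hWdef
  have hSW : Commute S W := by
    apply Commute.sum_right
    intro j _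
    exact ((Commute.refl S).neg_right).pow_right j
  have hnS : (-S) ^ m = 0 := by rw [neg_pow, hS, mul_zero]
  have hWTU : W * TU = 1 := by
    have hg := geom_sum_mul (-S) m
    rw [hnS, zero_sub] at hg
    have h2 : W * TU = -(W * (-S - 1)) := by rw [hTU]; noncomm_ring
    rw [h2, hWdef, hg, neg_neg]
  have hcWTU : Commute W TU := by
    rw [hTU]
    exact (Commute.one_right W).add_right hSW.symm
  have hrecover : ∀ (n : ℕ) (y : V), (W ^ n) ((TU ^ n) y) = y := by
    intro n y
    have h1 : W ^ n * TU ^ n = 1 := by rw [← hcWTU.mul_pow, hWTU, one_pow]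
    have := LinearMap.congr_fun h1 y
    simpa [Module.End.mul_apply] using this
  -- W = 1 + S' with S' nilpotent
  set S' : (V →ₗ[ℝ] V) := W - 1 with hS'def
  have hW1 : W = 1 + S' := by rw [hS'def]; abel
  have hS' : S' ^ m = 0 := by
    have hWsum : W = (∑ j ∈ Finset.range m₀, (-S) ^ (j + 1)) + 1 := by
      rw [hWdef, hmdef, Finset.sum_range_succ']
      simp
    have hS'eq : S' = (-S) * (∑ j ∈ Finset.range m₀, (-S) ^ j) := by
      rw [hS'def, hWsum, add_sub_cancel_right, Finset.mul_sum]
      apply Finset.sum_congr rfl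
      intro j _
      rw [pow_succ']
    have hQ : Commute (-S) (∑ j ∈ Finset.range m₀, (-S) ^ j) := by
      apply Commute.sum_right
      intro j _
      exact (Commute.refl (-S)).pow_right j
    rw [hS'eq, hQ.mul_pow, hnS, zero_mul]
  -- bound for the S'-sum
  set B : ℝ := ∑ j ∈ Finset.range m,
      Cu * ‖LinearMap.toContinuousLinearMap (S' ^ j)‖ / Cl with hBdef
  have hBnn : 0 ≤ B :=
    Finset.sum_nonneg fun j _ => by positivity
  have hB : ∀ y : V, ∑ j ∈ Finset.range m, N ((S' ^ j) y) ≤ B * N y := by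
    intro y
    rw [hBdef, Finset.sum_mul]
    apply Finset.sum_le_sum
    intro j _
    have h1 : N ((S' ^ j) y) ≤ Cu * ‖(S' ^ j) y‖ := hub _
    have h2 : ‖(S' ^ j) y‖ ≤ ‖LinearMap.toContinuousLinearMap (S' ^ j)‖ * ‖y‖ := by
      have := (LinearMap.toContinuousLinearMap (S' ^ j)).le_opNorm y
      simpa using this
    have h3 : ‖y‖ ≤ N y / Cl := by
      rw [le_div_iff₀ hCl]
      have := hlb y
      linarith
    have h4 : (0:ℝ) ≤ ‖LinearMap.toContinuousLinearMap (S' ^ j)‖ := norm_nonneg _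
    calc N ((S' ^ j) y) ≤ Cu * (‖LinearMap.toContinuousLinearMap (S' ^ j)‖ * ‖y‖) :=
          h1.trans (mul_le_mul_of_nonneg_left h2 hCu.le)
      _ ≤ Cu * (‖LinearMap.toContinuousLinearMap (S' ^ j)‖ * (N y / Cl)) := by
          apply mul_le_mul_of_nonneg_left _ hCu.le
          exact mul_le_mul_of_nonneg_left h3 h4
      _ = Cu * ‖LinearMap.toContinuousLinearMap (S' ^ j)‖ / Cl * N y := by ring
  -- lower bound
  have hlower : ∀ n : ℕ, N x ≤ ((n:ℝ) + 1) ^ m * (B * N ((TU ^ n) x)) := by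
    intro n
    calc N x = N ((W ^ n) ((TU ^ n) x)) := (congrArg N (hrecover n x)).symm
      _ ≤ ((n:ℝ) + 1) ^ m * ∑ j ∈ Finset.range m, N ((S' ^ j) ((TU ^ n) x)) := by
          have := unipotent_pow_bound h0 htri hsmul S' hS' ((TU ^ n) x) n
          rw [← hW1] at this
          exact this
      _ ≤ ((n:ℝ) + 1) ^ m * (B * N ((TU ^ n) x)) :=
          mul_le_mul_of_nonneg_left (hB _) (by positivity)
  rcases hlne.lt_or_gt with hlt | hgt
  · -- l < 1 : the orbit tends to 0
    have hg := poly_geom_tendsto m hl.le hlt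
    have hgK := hg.mul_const K
    rw [zero_mul] at hgK
    have hto : Filter.Tendsto (fun n : ℕ => N (T^[n] x)) atTop (𝓝 0) := by
      apply squeeze_zero (fun n => h0 _) _ hgK
      intro n
      rw [← Module.End.pow_apply]
      exact hupper n
    have hcl : MapClusterPt (N x) atTop (fun n => N (T^[n] x)) := by
      have := hrec.continuousAt_comp hNcont.continuousAt
      exact this
    have hzero : N x = 0 := by
      have h2 : ClusterPt (N x) (𝓝 0) := hcl.clusterPt.mono hto
      exact eq_of_nhds_neBot h2
    exact (hdef x).mp hzero
  · -- l > 1 : contradiction with recurrence unless x = 0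
    by_contra hx0
    have hNx : 0 < N x :=
      lt_of_le_of_ne (h0 x) fun h => hx0 ((hdef x).mp h.symm)
    have hfreq : ∃ᶠ n in atTop, N (T^[n] x) ≤ Cu + N x := by
      have hmem := mapClusterPt_iff_frequently.mp hrec (Metric.ball x 1) (Metric.ball_mem_nhds x one_pos)
      apply hmem.mono
      intro n hn
      have h1 : N (T^[n] x) ≤ N (T^[n] x - x) + N x := by
        have := htri (T^[n] x - x) x
        simpa using this
      have h2 : N (T^[n] x - x) ≤ Cu * ‖T^[n] x - x‖ := hub _
      have h3 : ‖T^[n] x - x‖ < 1 := by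
        rw [← dist_eq_norm]
        exact Metric.mem_ball.mp hn
      nlinarith
    have hchain : ∀ n : ℕ, N x ≤ (((n:ℝ) + 1) ^ m * (l⁻¹) ^ n) * (B * N (T^[n] x)) := by
      intro n
      have hTUval : N ((TU ^ n) x) = (l⁻¹) ^ n * N (T^[n] x) := by
        rw [← Module.End.pow_apply, hNTn n, inv_pow]
        field_simp
      have := hlower n
      rw [hTUval] at this
      calc N x ≤ ((n:ℝ) + 1) ^ m * (B * ((l⁻¹) ^ n * N (T^[n] x))) := this
        _ = (((n:ℝ) + 1) ^ m * (l⁻¹) ^ n) * (B * N (T^[n] x)) := by ring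
    have hev : ∀ᶠ n : ℕ in atTop,
        (((n:ℝ) + 1) ^ m * (l⁻¹) ^ n) * (B * (Cu + N x)) < N x := by
      have hg0 := poly_geom_tendsto m (inv_nonneg.mpr hl.le) (inv_lt_one_of_one_lt₀ hgt)
      have h2 := hg0.mul_const (B * (Cu + N x))
      rw [zero_mul] at h2
      exact h2.eventually_lt_const hNx
    obtain ⟨n, hn1, hn2⟩ := (hfreq.and_eventually hev).exists
    have hpoly : (0:ℝ) ≤ ((n:ℝ) + 1) ^ m * (l⁻¹) ^ n := by positivity
    have step1 := hchain n
    have step2 : B * N (T^[n] x) ≤ B * (Cu + N x) :=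
      mul_le_mul_of_nonneg_left hn1 hBnn
    have step3 : (((n:ℝ) + 1) ^ m * (l⁻¹) ^ n) * (B * N (T^[n] x)) ≤
        (((n:ℝ) + 1) ^ m * (l⁻¹) ^ n) * (B * (Cu + N x)) :=
      mul_le_mul_of_nonneg_left step2 hpoly
    linarith

end Key

/-- if `v` is a recurrent point of a linear isomorphism `T` which is an
eigenvector of the hyperbolic part `T_H` with eigenvalue `λ > 0`, then `λ = 1`;
in particular every recurrent point of `T` is fixed by `T_H`. -/
theorem eigenvalue_one_of_recurrent {V : Type*} [NormedAddCommGroup V] [NormedSpace ℝ V]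
    [FiniteDimensional ℝ V] (T TH TE TU : V →ₗ[ℝ] V)
    (hbij : Function.Bijective T) (hJ : IsMulJordanDecomp T TH TE TU)
    (v : V) (hv : v ∈ recurrentSet T) (hv0 : v ≠ 0)
    (l : ℝ) (hl : 0 < l) (heig : TH v = l • v) :
    l = 1 ∧ recurrentSet T ⊆ {w | TH w = w} := by

  obtain ⟨d, b, c, hc, hb⟩ := hJ.hyperbolic
  have hTHT : Commute TH T := by
    rw [hJ.eq]
    exact (Commute.refl TH).mul_right (hJ.commHE.mul_right hJ.commHU)
  constructor
  · by_contra hl1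
    exact hv0 (jordan_key hJ hl hl1 heig hv)
  · intro w hw
    show TH w = w
    have hrepr : ∀ i, b.repr (TH w) i = b.repr w i := by
      intro i
      rw [coord_TH b c hb w i]
      by_cases hci : c i = 1
      · rw [hci, one_mul]
      · set μ := c i with hμdef
        set P := eigProj b c μ with hPdef
        set x := P w with hxdef
        have hxeig : TH x = μ • x := eigProj_eigen b c hb μ w
        have hcomm : ∀ (n : ℕ) (z : V), P ((T ^ n) z) = (T ^ n) (P z) := by
          intro n z
          apply eigProj_comm b c hb μ (T ^ n) _ z
          intro z'
          have := LinearMap.congr_fun (hTHT.pow_right n) z'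
          simpa [Module.End.mul_apply] using this
        have hxrec : MapClusterPt x atTop fun n => T^[n] x := by
          have h1 := hw.continuousAt_comp P.continuous_of_finiteDimensional.continuousAt
          have h2 : (⇑P ∘ fun n => T^[n] w) = fun n => T^[n] x := by
            funext n
            show P (T^[n] w) = T^[n] x
            rw [← Module.End.pow_apply, hcomm n w, hxdef, Module.End.pow_apply]
          rwa [h2] at h1
        have hx0 : x = 0 := jordan_key hJ (hc i) hci hxeig hxrec
        have hzero : b.repr w i = 0 := by
          rw [← eigProj_repr b c μ w (rfl : c i = μ), ← hPdef, ← hxdef, hx0]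
          simp
        rw [hzero, mul_zero]
    exact b.repr.injective (Finsupp.ext hrepr)
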